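/- Let A be a bounded normal operator on a complex Hilbert space H and let T be the block operator matrix [[A + A*, −A*A], [I, 0]] on H ⊕ H. If w ∈ ℂ is nonzero with w ∈ ρ(A) and conj(w) ∈ ρ(A), then w ∈ ρ(T) and (T − w)^{−1} = [[ −w(A* − w)^{−1}(A − w)^{−1}, (A* − w)^{−1}(A − w)^{−1}A*A ], [ −(A* − w)^{−1}(A − w)^{−1}, −w^{−1} + w^{−1}(A* − w)^{−1}(A − w)^{−1}A*A ]]. -/

import Mathlib

open scoped InnerProductSpace ComplexConjugate
open Complex ContinuousLinearMap

noncomputable section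

variable {H : Type*} [NormedAddCommGroup H] [InnerProductSpace ℂ H] [CompleteSpace H]

/-- Block operator matrix `[[B11, B12],[B21, B22]]` on `E × E`. -/
def block2 {E : Type*} [NormedAddCommGroup E] [NormedSpace ℂ E]
    (B11 B12 B21 B22 : E →L[ℂ] E) : (E × E) →L[ℂ] (E × E) :=
  ((B11 ∘L ContinuousLinearMap.fst ℂ E E) + (B12 ∘L ContinuousLinearMap.snd ℂ E E)).prod
  ((B21 ∘L ContinuousLinearMap.fst ℂ E E) + (B22 ∘L ContinuousLinearMap.snd ℂ E E))

/-- The linearisation `T = [[A + A*, −A*A],[I, 0]]` on `H × H`. -/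
def blockT (A : H →L[ℂ] H) : (H × H) →L[ℂ] (H × H) :=
  block2 (A + ContinuousLinearMap.adjoint A) (-(ContinuousLinearMap.adjoint A * A)) 1 0

lemma block2_mul {E : Type*} [NormedAddCommGroup E] [NormedSpace ℂ E]
    (a b c d e f g h : E →L[ℂ] E) :
    block2 a b c d * block2 e f g h =
      block2 (a*e + b*g) (a*f + b*h) (c*e + d*g) (c*f + d*h) := by
  apply ContinuousLinearMap.ext
  rintro ⟨x, y⟩
  simp [block2, ContinuousLinearMap.mul_apply, Prod.ext_iff]
  constructor <;> abel

lemma block2_one {E : Type*} [NormedAddCommGroup E] [NormedSpace ℂ E] :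
    block2 (1 : E →L[ℂ] E) 0 0 1 = 1 := by
  apply ContinuousLinearMap.ext
  rintro ⟨x, y⟩
  simp [block2]

lemma blockT_sub (A : H →L[ℂ] H) (w : ℂ) :
    blockT A - w • 1 =
      block2 (A + ContinuousLinearMap.adjoint A - w • 1) (-(ContinuousLinearMap.adjoint A * A))
        1 (-(w • 1)) := by
  apply ContinuousLinearMap.ext
  rintro ⟨x, y⟩
  simp [blockT, block2, Prod.ext_iff, sub_add_eq_sub_sub]
  constructor <;> abel

lemma aux_block {E : Type*} [NormedAddCommGroup E] [NormedSpace ℂ E]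
    (P N R : E →L[ℂ] E) (w : ℂ) (hw0 : w ≠ 0)
    (key1 : N * R - w • (P * R) = 1) (key2 : R * N - w • (R * P) = 1) :
    block2 P (-N) 1 (-(w • 1)) *
        block2 ((-w) • R) (R * N) (-R) ((-w⁻¹) • (1 : E →L[ℂ] E) + w⁻¹ • (R * N)) = 1 ∧
      block2 ((-w) • R) (R * N) (-R) ((-w⁻¹) • (1 : E →L[ℂ] E) + w⁻¹ • (R * N)) *
        block2 P (-N) 1 (-(w • 1)) = 1 := by
  have hPR : P * R = w⁻¹ • (N * R) - w⁻¹ • 1 := by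
    have h5 : w • (P * R) = N * R - 1 := by rw [← key1]; abel
    have h6 : P * R = w⁻¹ • (N * R - 1) := by
      rw [← h5, smul_smul, inv_mul_cancel₀ hw0, one_smul]
    rw [h6, smul_sub]
  have hRP : R * P = w⁻¹ • (R * N) - w⁻¹ • 1 := by
    have h5 : w • (R * P) = R * N - 1 := by rw [← key2]; abel
    have h6 : R * P = w⁻¹ • (R * N - 1) := by
      rw [← h5, smul_smul, inv_mul_cancel₀ hw0, one_smul]
    rw [h6, smul_sub]
  constructor
  · rw [block2_mul]
    rw [show P * ((-w) • R) + -N * -R = 1 by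
      rw [mul_smul_comm, hPR]
      simp [smul_sub, smul_smul, neg_mul, mul_inv_cancel₀ hw0, inv_mul_cancel₀ hw0, neg_smul, one_smul]
      all_goals abel]
    rw [show P * (R * N) + -N * ((-w⁻¹) • 1 + w⁻¹ • (R * N)) = 0 by
      rw [← mul_assoc, hPR]
      simp [sub_mul, smul_mul_assoc, mul_add, mul_smul_comm, mul_assoc]
      all_goals abel]
    rw [show (1 : E →L[ℂ] E) * ((-w) • R) + -(w • 1) * -R = 0 by
      simp [smul_mul_assoc]]
    rw [show (1 : E →L[ℂ] E) * (R * N) + -(w • 1) * ((-w⁻¹) • 1 + w⁻¹ • (R * N)) = 1 by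
      simp [mul_add, smul_mul_assoc, smul_smul, mul_inv_cancel₀ hw0, inv_mul_cancel₀ hw0, neg_smul, one_smul]
      all_goals abel]
    exact block2_one
  · rw [block2_mul]
    rw [show ((-w) • R) * P + (R * N) * 1 = 1 by
      rw [smul_mul_assoc, hRP]
      simp [smul_sub, smul_smul, neg_mul, mul_inv_cancel₀ hw0, inv_mul_cancel₀ hw0, neg_smul, one_smul]
      all_goals abel]
    rw [show ((-w) • R) * -N + (R * N) * -(w • 1) = 0 by
      simp [smul_mul_assoc, mul_smul_comm]]
    rw [show (-R) * P + ((-w⁻¹) • 1 + w⁻¹ • (R * N)) * 1 = 0 by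
      rw [neg_mul, hRP]
      simp [smul_sub]
      all_goals abel]
    rw [show (-R) * -N + ((-w⁻¹) • 1 + w⁻¹ • (R * N)) * -(w • 1) = 1 by
      simp [add_mul, smul_mul_assoc, mul_smul_comm, smul_smul, inv_mul_cancel₀ hw0, mul_inv_cancel₀ hw0, neg_smul, one_smul]
      all_goals abel]
    exact block2_one

/-- The explicit formula for the resolvent of the linearisation `T` at a nonzero point `w`
with `w ∈ ρ(A)` and `conj w ∈ ρ(A)` (i.e. `w ∈ ρ(A*)`). -/
theorem stmt6 (A : H →L[ℂ] H) (hA : IsStarNormal A) (w : ℂ) (hw0 : w ≠ 0)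
    (hwA : w ∉ spectrum ℂ A) (hwAstar : conj w ∉ spectrum ℂ A) :
    w ∉ spectrum ℂ (blockT A) ∧
      Ring.inverse (blockT A - w • 1) =
        block2
          ((-w) • (Ring.inverse (ContinuousLinearMap.adjoint A - w • 1) *
            Ring.inverse (A - w • 1)))
          (Ring.inverse (ContinuousLinearMap.adjoint A - w • 1) * Ring.inverse (A - w • 1) *
            (ContinuousLinearMap.adjoint A * A))
          (-(Ring.inverse (ContinuousLinearMap.adjoint A - w • 1) * Ring.inverse (A - w • 1)))
          ((-w⁻¹) • 1 + w⁻¹ • (Ring.inverse (ContinuousLinearMap.adjoint A - w • 1) *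
            Ring.inverse (A - w • 1) * (ContinuousLinearMap.adjoint A * A))) := by
  have hS : IsUnit (A - w • (1 : H →L[ℂ] H)) := by
    rw [spectrum.notMem_iff] at hwA
    simpa [Algebra.algebraMap_eq_smul_one, neg_sub] using hwA.neg
  have hS' : IsUnit (ContinuousLinearMap.adjoint A - w • (1 : H →L[ℂ] H)) := by
    rw [spectrum.notMem_iff] at hwAstar
    have := hwAstar.neg.star
    simpa [Algebra.algebraMap_eq_smul_one, neg_sub, star_sub, star_smul,
      ContinuousLinearMap.star_eq_adjoint] using this
  set A' := ContinuousLinearMap.adjoint A with hA'def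
  set S := A - w • (1 : H →L[ℂ] H) with hSdef
  set S' := A' - w • (1 : H →L[ℂ] H) with hS'def
  set Ra := Ring.inverse S with hRa
  set Ra' := Ring.inverse S' with hRa'
  set N := A' * A with hNdef
  set P := A + A' - w • (1 : H →L[ℂ] H) with hPdef
  set R := Ra' * Ra with hRdef
  have h1 : S * Ra = 1 := Ring.mul_inverse_cancel _ hS
  have h2 : Ra * S = 1 := Ring.inverse_mul_cancel _ hS
  have h3 : S' * Ra' = 1 := Ring.mul_inverse_cancel _ hS'
  have h4 : Ra' * S' = 1 := Ring.inverse_mul_cancel _ hS'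
  have hcomm : A * A' = A' * A := by
    simpa [ContinuousLinearMap.star_eq_adjoint] using hA.star_comm_self.symm.eq
  have hExp : S * S' = N - w • P := by
    simp only [hSdef, hS'def, hNdef, hPdef, sub_mul, mul_sub, smul_mul_assoc, mul_smul_comm,
      mul_one, one_mul, smul_sub, smul_smul, smul_add]
    rw [hcomm]
    abel
  have hRSS : S * S' * R = 1 := by
    rw [hRdef, mul_assoc, ← mul_assoc S', h3, one_mul, h1]
  have hSSR : R * (S * S') = 1 := by
    rw [hRdef, mul_assoc Ra', ← mul_assoc Ra, h2, one_mul, h4]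
  have key1 : N * R - w • (P * R) = 1 := by
    rw [hExp] at hRSS
    rw [← hRSS, sub_mul N (w • P) R, smul_mul_assoc w P R]
  have key2 : R * N - w • (R * P) = 1 := by
    rw [hExp] at hSSR
    rw [← hSSR, mul_sub R N (w • P), mul_smul_comm w R P]
  obtain ⟨hTB, hBT⟩ := aux_block P N R w hw0 key1 key2
  rw [← blockT_sub A w] at hTB hBT
  refine ⟨?_, ?_⟩
  · rw [spectrum.notMem_iff]
    have hu : IsUnit (blockT A - w • 1) := ⟨⟨_, _, hTB, hBT⟩, rfl⟩
    simpa [Algebra.algebraMap_eq_smul_one, neg_sub] using hu.neg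
  · exact Ring.inverse_unit
      ⟨blockT A - w • 1,
        block2 ((-w) • R) (R * N) (-R) ((-w⁻¹) • (1 : H →L[ℂ] H) + w⁻¹ • (R * N)), hTB, hBT⟩

end
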